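/- Let ξ ∈ ℂ^4, U ∈ ℝ^4 with U^0 > ν, -U^α U_α > ν for some ν > 0 and |U| bounded, let Θ ≥ 0, and define h_{αβ} = (1/2)(ξ_α ξ̄_β + ξ̄_α ξ_β) − (1/2) g_{αβ} ξ_γ ξ̄^γ − g_{αβ} Θ with g = diag(-1,1,1,1). Then there exist constants c₂(ν) > 0 and c₃ > 0 (depending on ν and the bound on U) such that c₂ h_{00} ≤ h_{0β} U^β ≤ c₃ h_{00}, where h_{00} = (1/2)Σ_α |ξ_α|² + Θ. -/

import Mathlib

open scoped BigOperators

set_option maxHeartbeats 1000000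
open scoped BigOperators

-- lower bound aux
lemma aux_low (ν Mv : ℝ) (hν : 0 < ν) (hMν : ν ≤ Mv)
    (x0 y0 x1 y1 x2 y2 x3 y3 U0 U1 U2 U3 Θ : ℝ)
    (hΘ : 0 ≤ Θ) (hU0 : ν < U0) (hU0b : U0 ≤ Mv)
    (hUU : ν < U0^2 - U1^2 - U2^2 - U3^2) :
    min (ν/(2*Mv)) (ν/2) *
      ((1/2)*(x0^2+y0^2+(x1^2+y1^2)+(x2^2+y2^2)+(x3^2+y3^2)) + Θ) ≤
    ((1/2)*(x0^2+y0^2+(x1^2+y1^2)+(x2^2+y2^2)+(x3^2+y3^2)) + Θ)*U0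
      + (x0*x1+y0*y1)*U1 + (x0*x2+y0*y2)*U2 + (x0*x3+y0*y3)*U3 := by
  have hMv0 : 0 < Mv := lt_of_lt_of_le hν hMν
  set c := min (ν/(2*Mv)) (ν/2) with hc
  have hc0 : 0 < c := lt_min (by positivity) (by positivity)
  have hcν : c ≤ ν/2 := min_le_right _ _
  have hcM : c ≤ ν/(2*Mv) := min_le_left _ _
  have hid : c*Mv ≤ ν/2 := by
    calc c*Mv ≤ (ν/(2*Mv))*Mv := mul_le_mul_of_nonneg_right hcM hMv0.le
    _ = ν/2 := by field_simp
  have hcU : 2*c*U0 ≤ ν := by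
    linarith [hid, mul_nonneg hc0.le (sub_nonneg.2 hU0b)]
  have hε0 : 0 < U0 - c := by linarith
  have hεs : U1^2+U2^2+U3^2 ≤ (U0-c)^2 := by nlinarith [sq_nonneg c]
  have hA : (0:ℝ) ≤ (x0^2+y0^2) * ((U0-c)^2 - (U1^2+U2^2+U3^2)) := by
    apply mul_nonneg (by positivity); linarith
  have hT : (0:ℝ) ≤ Θ * (U0-c)^2 := by positivity
  have key : 0 ≤ 2*(U0-c)*(
      (((1/2)*(x0^2+y0^2+(x1^2+y1^2)+(x2^2+y2^2)+(x3^2+y3^2)) + Θ)*U0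
      + (x0*x1+y0*y1)*U1 + (x0*x2+y0*y2)*U2 + (x0*x3+y0*y3)*U3)
      - c * ((1/2)*(x0^2+y0^2+(x1^2+y1^2)+(x2^2+y2^2)+(x3^2+y3^2)) + Θ)) := by
    linarith [sq_nonneg ((U0-c)*x1+x0*U1), sq_nonneg ((U0-c)*y1+y0*U1),
      sq_nonneg ((U0-c)*x2+x0*U2), sq_nonneg ((U0-c)*y2+y0*U2),
      sq_nonneg ((U0-c)*x3+x0*U3), sq_nonneg ((U0-c)*y3+y0*U3), hA, hT]
  have h2e : (0:ℝ) < 2*(U0-c) := by linarith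
  have hD := (mul_nonneg_iff_of_pos_left h2e).1 key
  linarith [hD]

lemma aux_up (Mv : ℝ) (x0 y0 x1 y1 x2 y2 x3 y3 U0 U1 U2 U3 Θ : ℝ)
    (hΘ : 0 ≤ Θ) (h0 : |U0| ≤ Mv) (h1 : |U1| ≤ Mv) (h2 : |U2| ≤ Mv) (h3 : |U3| ≤ Mv) :
    ((1/2)*(x0^2+y0^2+(x1^2+y1^2)+(x2^2+y2^2)+(x3^2+y3^2)) + Θ)*U0
      + (x0*x1+y0*y1)*U1 + (x0*x2+y0*y2)*U2 + (x0*x3+y0*y3)*U3 ≤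
    (4*Mv) * ((1/2)*(x0^2+y0^2+(x1^2+y1^2)+(x2^2+y2^2)+(x3^2+y3^2)) + Θ) := by
  have hMv0 : 0 ≤ Mv := le_trans (abs_nonneg _) h0
  have hq1 : |x0*x1+y0*y1| ≤ (x0^2+x1^2+y0^2+y1^2)/2 :=
    abs_le.2 ⟨by nlinarith [sq_nonneg (x0+x1), sq_nonneg (y0+y1)],
              by nlinarith [sq_nonneg (x0-x1), sq_nonneg (y0-y1)]⟩
  have hq2 : |x0*x2+y0*y2| ≤ (x0^2+x2^2+y0^2+y2^2)/2 :=
    abs_le.2 ⟨by nlinarith [sq_nonneg (x0+x2), sq_nonneg (y0+y2)],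
              by nlinarith [sq_nonneg (x0-x2), sq_nonneg (y0-y2)]⟩
  have hq3 : |x0*x3+y0*y3| ≤ (x0^2+x3^2+y0^2+y3^2)/2 :=
    abs_le.2 ⟨by nlinarith [sq_nonneg (x0+x3), sq_nonneg (y0+y3)],
              by nlinarith [sq_nonneg (x0-x3), sq_nonneg (y0-y3)]⟩
  have e1 : (x0*x1+y0*y1)*U1 ≤ ((x0^2+x1^2+y0^2+y1^2)/2)*Mv :=
    le_trans (le_trans (le_abs_self _) (le_of_eq (abs_mul _ _)))
      (mul_le_mul hq1 h1 (abs_nonneg _) (by positivity))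
  have e2 : (x0*x2+y0*y2)*U2 ≤ ((x0^2+x2^2+y0^2+y2^2)/2)*Mv :=
    le_trans (le_trans (le_abs_self _) (le_of_eq (abs_mul _ _)))
      (mul_le_mul hq2 h2 (abs_nonneg _) (by positivity))
  have e3 : (x0*x3+y0*y3)*U3 ≤ ((x0^2+x3^2+y0^2+y3^2)/2)*Mv :=
    le_trans (le_trans (le_abs_self _) (le_of_eq (abs_mul _ _)))
      (mul_le_mul hq3 h3 (abs_nonneg _) (by positivity))
  have e0 : ((1/2)*(x0^2+y0^2+(x1^2+y1^2)+(x2^2+y2^2)+(x3^2+y3^2)) + Θ)*U0 ≤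
      ((1/2)*(x0^2+y0^2+(x1^2+y1^2)+(x2^2+y2^2)+(x3^2+y3^2)) + Θ)*Mv :=
    mul_le_mul_of_nonneg_left (le_trans (le_abs_self _) h0) (by positivity)
  have hB : (0:ℝ) ≤ Mv * (x1^2+y1^2+x2^2+y2^2+x3^2+y3^2) := by positivity
  have hTT : (0:ℝ) ≤ Mv * Θ := by positivity
  linarith [e0, e1, e2, e3, hB, hTT]


/-- Partial derivative `∂_i f` on `ℝ^{1+3}` (index `0` is time). -/
noncomputable def pd (i : Fin 4) (f : (Fin 4 → ℝ) → ℝ) (x : Fin 4 → ℝ) : ℝ :=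
  fderiv ℝ f x (Pi.single i 1)

/-- Partial derivative `∂_i f` for complex-valued `f`. -/
noncomputable def pdC (i : Fin 4) (f : (Fin 4 → ℝ) → ℂ) (x : Fin 4 → ℝ) : ℂ :=
  fderiv ℝ f x (Pi.single i 1)

/-- Diagonal entries of the Minkowski metric `diag(-1,1,1,1)`. -/
def mink (i : Fin 4) : ℝ := if i = 0 then -1 else 1

/-- The wave operator `□ = -∂_t² + Δ`. -/
noncomputable def box (f : (Fin 4 → ℝ) → ℝ) (x : Fin 4 → ℝ) : ℝ :=
  ∑ i : Fin 4, mink i * pd i (pd i f) x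

/-- The wave operator on complex-valued functions. -/
noncomputable def boxC (f : (Fin 4 → ℝ) → ℂ) (x : Fin 4 → ℝ) : ℂ :=
  ∑ i : Fin 4, (mink i : ℂ) * pdC i (pdC i f) x

/-- Pointwise coercivity of the modulated energy flux `η(U) = h_{0β} U^β` in the frame of a
uniformly timelike, future-directed, bounded vector `U`. -/
theorem stmt18 (ν M : ℝ) (hν : 0 < ν) :
    ∃ c₂ c₃ : ℝ, 0 < c₂ ∧ 0 < c₃ ∧
      ∀ (ξ : Fin 4 → ℂ) (U : Fin 4 → ℝ) (Θ : ℝ), 0 ≤ Θ →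
        ν < U 0 → ν < -(∑ α : Fin 4, mink α * U α * U α) → (∀ α, |U α| ≤ M) →
        ∀ h : Fin 4 → Fin 4 → ℝ,
          (h = fun α β =>
            (1 / 2) * (ξ α * (starRingEnd ℂ) (ξ β) + (starRingEnd ℂ) (ξ α) * ξ β).re
            - (1 / 2) * (if α = β then mink α else 0) *
                (∑ δ : Fin 4, mink δ * (ξ δ * (starRingEnd ℂ) (ξ δ)).re)
            - (if α = β then mink α else 0) * Θ) →
          h 0 0 = (1 / 2) * (∑ α : Fin 4, ‖ξ α‖ ^ 2) + Θ ∧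
          c₂ * h 0 0 ≤ ∑ β : Fin 4, h 0 β * U β ∧
          (∑ β : Fin 4, h 0 β * U β) ≤ c₃ * h 0 0 := by
  refine ⟨min (ν/(2*max M ν)) (ν/2), 4*max M ν, ?_, ?_, ?_⟩
  · have : (0:ℝ) < max M ν := lt_of_lt_of_le hν (le_max_right _ _)
    exact lt_min (by positivity) (by positivity)
  · have : (0:ℝ) < max M ν := lt_of_lt_of_le hν (le_max_right _ _)
    positivity
  intro ξ U Θ hΘ hU0 hUU hUb h hh
  subst hh
  simp only [Fin.sum_univ_four, mink] at hUU ⊢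
  norm_num [Complex.add_re, Complex.mul_re, Complex.conj_re, Complex.conj_im,
    Complex.sq_norm, Complex.normSq_apply,
    (by decide : (2:Fin 4) ≠ 0), (by decide : (3:Fin 4) ≠ 0),
    (by decide : (0:Fin 4) ≠ 2), (by decide : (0:Fin 4) ≠ 3),
    (by decide : (0:Fin 4) ≠ 1), (by decide : (1:Fin 4) ≠ 0)] at hUU ⊢
  have hMν : ν ≤ max M ν := le_max_right _ _
  have hU0b : U 0 ≤ max M ν := le_trans (le_trans (le_abs_self _) (hUb 0)) (le_max_left _ _)
  have hb : ∀ α, |U α| ≤ max M ν := fun α => le_trans (hUb α) (le_max_left _ _)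
  have hUU' : ν < (U 0)^2 - (U 1)^2 - (U 2)^2 - (U 3)^2 := by nlinarith [hUU]
  refine ⟨by ring, ?_, ?_⟩
  · have := aux_low ν (max M ν) hν hMν (ξ 0).re (ξ 0).im (ξ 1).re (ξ 1).im
      (ξ 2).re (ξ 2).im (ξ 3).re (ξ 3).im (U 0) (U 1) (U 2) (U 3) Θ hΘ hU0 hU0b hUU'
    nlinarith [this]
  · have := aux_up (max M ν) (ξ 0).re (ξ 0).im (ξ 1).re (ξ 1).im
      (ξ 2).re (ξ 2).im (ξ 3).re (ξ 3).im (U 0) (U 1) (U 2) (U 3) Θ hΘ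
      (hb 0) (hb 1) (hb 2) (hb 3)
    nlinarith [this]
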